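/- Let q be a complex number. In the Iwahori-Hecke-type algebra Aff(q) generated by T₁, T₂ with relations (T₁−(q−1))(T₁+1)=0, (T₂−q)(T₂+1)=0, (T₁T₂)² = (q−1)T₂T₁ + (q−1)T₂T₁T₂ − T₁T₂T₁, and (T₂T₁)² = (q−1)T₁T₂ + (q−1)T₂T₁T₂ − T₁T₂T₁, the seven elements 1, T₁, T₂, T₁T₂, T₂T₁, T₁T₂T₁, T₂T₁T₂ span Aff(q) as a ℂ-vector space; hence dim Aff(q) ≤ 7. -/
import Mathlib


/-- The defining relations of the algebra `Aff(q)`, imposed on the free algebra on two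
generators `T₁ = ι 0`, `T₂ = ι 1`. -/
inductive AffRel (q : ℂ) : FreeAlgebra ℂ (Fin 2) → FreeAlgebra ℂ (Fin 2) → Prop
  | quad1 : AffRel q
      ((FreeAlgebra.ι ℂ (0 : Fin 2) - algebraMap ℂ _ (q - 1)) * (FreeAlgebra.ι ℂ (0 : Fin 2) + 1)) 0
  | quad2 : AffRel q
      ((FreeAlgebra.ι ℂ (1 : Fin 2) - algebraMap ℂ _ q) * (FreeAlgebra.ι ℂ (1 : Fin 2) + 1)) 0
  | braid1 : AffRel q
      ((FreeAlgebra.ι ℂ (0 : Fin 2) * FreeAlgebra.ι ℂ (1 : Fin 2)) ^ 2)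
      (algebraMap ℂ _ (q - 1) * (FreeAlgebra.ι ℂ (1 : Fin 2) * FreeAlgebra.ι ℂ (0 : Fin 2)) +
        algebraMap ℂ _ (q - 1) *
          (FreeAlgebra.ι ℂ (1 : Fin 2) * FreeAlgebra.ι ℂ (0 : Fin 2) * FreeAlgebra.ι ℂ (1 : Fin 2)) -
        FreeAlgebra.ι ℂ (0 : Fin 2) * FreeAlgebra.ι ℂ (1 : Fin 2) * FreeAlgebra.ι ℂ (0 : Fin 2))
  | braid2 : AffRel q
      ((FreeAlgebra.ι ℂ (1 : Fin 2) * FreeAlgebra.ι ℂ (0 : Fin 2)) ^ 2)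
      (algebraMap ℂ _ (q - 1) * (FreeAlgebra.ι ℂ (0 : Fin 2) * FreeAlgebra.ι ℂ (1 : Fin 2)) +
        algebraMap ℂ _ (q - 1) *
          (FreeAlgebra.ι ℂ (1 : Fin 2) * FreeAlgebra.ι ℂ (0 : Fin 2) * FreeAlgebra.ι ℂ (1 : Fin 2)) -
        FreeAlgebra.ι ℂ (0 : Fin 2) * FreeAlgebra.ι ℂ (1 : Fin 2) * FreeAlgebra.ι ℂ (0 : Fin 2))

/-- The algebra `Aff(q)`: generated by `T₁, T₂` subject to `(T₁-(q-1))(T₁+1)=0`,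
`(T₂-q)(T₂+1)=0`, `(T₁T₂)² = (q-1)T₂T₁ + (q-1)T₂T₁T₂ - T₁T₂T₁` and
`(T₂T₁)² = (q-1)T₁T₂ + (q-1)T₂T₁T₂ - T₁T₂T₁`. -/
abbrev Aff (q : ℂ) := RingQuot (AffRel q)

/-- The generator `T₁` of `Aff(q)`. -/
noncomputable def AffT1 (q : ℂ) : Aff q :=
  RingQuot.mkAlgHom ℂ (AffRel q) (FreeAlgebra.ι ℂ (0 : Fin 2))

/-- The generator `T₂` of `Aff(q)`. -/
noncomputable def AffT2 (q : ℂ) : Aff q :=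
  RingQuot.mkAlgHom ℂ (AffRel q) (FreeAlgebra.ι ℂ (1 : Fin 2))

/-- The seven elements `1, T₁, T₂, T₁T₂, T₂T₁, T₁T₂T₁, T₂T₁T₂` span `Aff(q)` as a
ℂ-vector space; hence `dim Aff(q) ≤ 7`. -/
private lemma aff_aux {R : Type*} [Ring R] {x y a b : R} (h : x = y) (u : R)
    (k : a - b = (x - y) * u) : a = b := by
  rw [h, sub_self, zero_mul] at k
  exact sub_eq_zero.mp k

private lemma aff_smul_mem {R A : Type*} [CommSemiring R] [Semiring A] [Algebra R A]
    (p : Submodule R A) (c : R) {x : A} (h : x ∈ p) : algebraMap R A c * x ∈ p := by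
  rw [← Algebra.smul_def]
  exact p.smul_mem c h

theorem stmt_15 (q : ℂ) :
    Submodule.span ℂ
        ({1, AffT1 q, AffT2 q, AffT1 q * AffT2 q, AffT2 q * AffT1 q,
          AffT1 q * AffT2 q * AffT1 q, AffT2 q * AffT1 q * AffT2 q} : Set (Aff q)) = ⊤ ∧
      Module.finrank ℂ (Aff q) ≤ 7 := by
  set t1 := AffT1 q with ht1
  set t2 := AffT2 q with ht2
  -- the four relations, transported to `Aff q`
  have e1 : (t1 - algebraMap ℂ (Aff q) (q - 1)) * (t1 + 1) = 0 := by
    have h := RingQuot.mkAlgHom_rel ℂ (AffRel.quad1 (q := q))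
    simpa [ht1, AffT1, map_mul, map_sub, map_add] using h
  have e2 : (t2 - algebraMap ℂ (Aff q) q) * (t2 + 1) = 0 := by
    have h := RingQuot.mkAlgHom_rel ℂ (AffRel.quad2 (q := q))
    simpa [ht2, AffT2, map_mul, map_sub, map_add] using h
  have e3 : (t1 * t2) ^ 2 =
      algebraMap ℂ (Aff q) (q - 1) * (t2 * t1) +
        algebraMap ℂ (Aff q) (q - 1) * (t2 * t1 * t2) - t1 * t2 * t1 := by
    have h := RingQuot.mkAlgHom_rel ℂ (AffRel.braid1 (q := q))
    simpa [ht1, ht2, AffT1, AffT2, map_mul, map_sub, map_add, map_pow] using h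
  have e4 : (t2 * t1) ^ 2 =
      algebraMap ℂ (Aff q) (q - 1) * (t1 * t2) +
        algebraMap ℂ (Aff q) (q - 1) * (t2 * t1 * t2) - t1 * t2 * t1 := by
    have h := RingQuot.mkAlgHom_rel ℂ (AffRel.braid2 (q := q))
    simpa [ht1, ht2, AffT1, AffT2, map_mul, map_sub, map_add, map_pow] using h
  set s : Set (Aff q) := {1, t1, t2, t1 * t2, t2 * t1, t1 * t2 * t1, t2 * t1 * t2} with hs
  set M := Submodule.span ℂ s with hM
  -- memberships of the seven generators
  have hm1 : (1 : Aff q) ∈ M := Submodule.subset_span (by simp [hs])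
  have hmt1 : t1 ∈ M := Submodule.subset_span (by simp [hs])
  have hmt2 : t2 ∈ M := Submodule.subset_span (by simp [hs])
  have hm12 : t1 * t2 ∈ M := Submodule.subset_span (by simp [hs])
  have hm21 : t2 * t1 ∈ M := Submodule.subset_span (by simp [hs])
  have hm121 : t1 * t2 * t1 ∈ M := Submodule.subset_span (by simp [hs])
  have hm212 : t2 * t1 * t2 ∈ M := Submodule.subset_span (by simp [hs])
  -- left multiplication by t1 preserves M
  have L1 : ∀ m ∈ M, t1 * m ∈ M := by
    intro m hm
    induction hm using Submodule.span_induction with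
    | mem x hx =>
      simp only [hs, Set.mem_insert_iff, Set.mem_singleton_iff] at hx
      rcases hx with h | h | h | h | h | h | h <;> rw [h]
      · simpa using hmt1
      · have h : t1 * t1 = algebraMap ℂ (Aff q) (q - 2) * t1
            + algebraMap ℂ (Aff q) (q - 1) * 1 := by
          refine aff_aux e1 1 ?_
          simp only [map_sub, map_one, map_ofNat, pow_two, sub_mul, mul_sub, add_mul,
            mul_add, one_mul, mul_one, mul_assoc, zero_mul, mul_zero, two_mul]
          try abel
        rw [h]; exact add_mem (aff_smul_mem M _ hmt1) (aff_smul_mem M _ hm1)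
      · exact hm12
      · have h : t1 * (t1 * t2) = algebraMap ℂ (Aff q) (q - 2) * (t1 * t2)
            + algebraMap ℂ (Aff q) (q - 1) * t2 := by
          refine aff_aux e1 t2 ?_
          simp only [map_sub, map_one, map_ofNat, pow_two, sub_mul, mul_sub, add_mul,
            mul_add, one_mul, mul_one, mul_assoc, zero_mul, mul_zero, two_mul]
          try abel
        rw [h]; exact add_mem (aff_smul_mem M _ hm12) (aff_smul_mem M _ hmt2)
      · rw [← mul_assoc]; exact hm121
      · have h : t1 * (t1 * t2 * t1) = algebraMap ℂ (Aff q) (q - 2) * (t1 * t2 * t1)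
            + algebraMap ℂ (Aff q) (q - 1) * (t2 * t1) := by
          refine aff_aux e1 (t2 * t1) ?_
          simp only [map_sub, map_one, map_ofNat, pow_two, sub_mul, mul_sub, add_mul,
            mul_add, one_mul, mul_one, mul_assoc, zero_mul, mul_zero, two_mul]
          try abel
        rw [h]; exact add_mem (aff_smul_mem M _ hm121) (aff_smul_mem M _ hm21)
      · have h : t1 * (t2 * t1 * t2) =
            algebraMap ℂ (Aff q) (q - 1) * (t2 * t1) +
              algebraMap ℂ (Aff q) (q - 1) * (t2 * t1 * t2) - t1 * t2 * t1 := by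
          refine aff_aux e3 1 ?_
          simp only [map_sub, map_one, map_ofNat, pow_two, sub_mul, mul_sub, add_mul,
            mul_add, one_mul, mul_one, mul_assoc, zero_mul, mul_zero, two_mul]
          try abel
        rw [h]
        exact sub_mem (add_mem (aff_smul_mem M _ hm21) (aff_smul_mem M _ hm212)) hm121
    | zero => simpa using M.zero_mem
    | add x y _ _ hx hy => rw [mul_add]; exact add_mem hx hy
    | smul a x _ hx => rw [mul_smul_comm]; exact M.smul_mem _ hx
  -- left multiplication by t2 preserves M
  have L2 : ∀ m ∈ M, t2 * m ∈ M := by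
    intro m hm
    induction hm using Submodule.span_induction with
    | mem x hx =>
      simp only [hs, Set.mem_insert_iff, Set.mem_singleton_iff] at hx
      rcases hx with h | h | h | h | h | h | h <;> rw [h]
      · simpa using hmt2
      · exact hm21
      · have h : t2 * t2 = algebraMap ℂ (Aff q) (q - 1) * t2
            + algebraMap ℂ (Aff q) q * 1 := by
          refine aff_aux e2 1 ?_
          simp only [map_sub, map_one, map_ofNat, pow_two, sub_mul, mul_sub, add_mul,
            mul_add, one_mul, mul_one, mul_assoc, zero_mul, mul_zero, two_mul]
          try abel
        rw [h]; exact add_mem (aff_smul_mem M _ hmt2) (aff_smul_mem M _ hm1)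
      · rw [← mul_assoc]; exact hm212
      · have h : t2 * (t2 * t1) = algebraMap ℂ (Aff q) (q - 1) * (t2 * t1)
            + algebraMap ℂ (Aff q) q * t1 := by
          refine aff_aux e2 t1 ?_
          simp only [map_sub, map_one, map_ofNat, pow_two, sub_mul, mul_sub, add_mul,
            mul_add, one_mul, mul_one, mul_assoc, zero_mul, mul_zero, two_mul]
          try abel
        rw [h]; exact add_mem (aff_smul_mem M _ hm21) (aff_smul_mem M _ hmt1)
      · have h : t2 * (t1 * t2 * t1) =
            algebraMap ℂ (Aff q) (q - 1) * (t1 * t2) +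
              algebraMap ℂ (Aff q) (q - 1) * (t2 * t1 * t2) - t1 * t2 * t1 := by
          refine aff_aux e4 1 ?_
          simp only [map_sub, map_one, map_ofNat, pow_two, sub_mul, mul_sub, add_mul,
            mul_add, one_mul, mul_one, mul_assoc, zero_mul, mul_zero, two_mul]
          try abel
        rw [h]
        exact sub_mem (add_mem (aff_smul_mem M _ hm12) (aff_smul_mem M _ hm212)) hm121
      · have h : t2 * (t2 * t1 * t2) = algebraMap ℂ (Aff q) (q - 1) * (t2 * t1 * t2)
            + algebraMap ℂ (Aff q) q * (t1 * t2) := by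
          refine aff_aux e2 (t1 * t2) ?_
          simp only [map_sub, map_one, map_ofNat, pow_two, sub_mul, mul_sub, add_mul,
            mul_add, one_mul, mul_one, mul_assoc, zero_mul, mul_zero, two_mul]
          try abel
        rw [h]; exact add_mem (aff_smul_mem M _ hm212) (aff_smul_mem M _ hm12)
    | zero => simpa using M.zero_mem
    | add x y _ _ hx hy => rw [mul_add]; exact add_mem hx hy
    | smul a x _ hx => rw [mul_smul_comm]; exact M.smul_mem _ hx
  -- every element of Aff q, multiplied into M, stays in M
  have key : ∀ x : FreeAlgebra ℂ (Fin 2), ∀ m ∈ M,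
      RingQuot.mkAlgHom ℂ (AffRel q) x * m ∈ M := by
    intro x
    induction x using FreeAlgebra.induction with
    | grade0 r =>
      intro m hm
      rw [AlgHom.commutes]
      exact aff_smul_mem M _ hm
    | grade1 i =>
      intro m hm
      fin_cases i
      · have h := L1 m hm
        rw [ht1] at h
        exact h
      · have h := L2 m hm
        rw [ht2] at h
        exact h
    | mul a b ha hb =>
      intro m hm
      rw [map_mul, mul_assoc]
      exact ha _ (hb m hm)
    | add a b ha hb =>
      intro m hm
      rw [map_add, add_mul]
      exact add_mem (ha m hm) (hb m hm)
  have hspan : M = ⊤ := by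
    rw [eq_top_iff]
    rintro a -
    obtain ⟨x, rfl⟩ := RingQuot.mkAlgHom_surjective ℂ (AffRel q) a
    simpa using key x 1 hm1
  refine ⟨hspan, ?_⟩
  have hr : Set.range ![(1 : Aff q), t1, t2, t1 * t2, t2 * t1, t1 * t2 * t1, t2 * t1 * t2]
      = s := by
    ext x
    simp only [hs, Set.mem_range, Set.mem_insert_iff, Set.mem_singleton_iff]
    constructor
    · rintro ⟨i, rfl⟩
      fin_cases i
      · left; rfl
      · right; left; rfl
      · right; right; left; rfl
      · right; right; right; left; rfl
      · right; right; right; right; left; rfl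
      · right; right; right; right; right; left; rfl
      · right; right; right; right; right; right; rfl
    · rintro (rfl | rfl | rfl | rfl | rfl | rfl | rfl)
      exacts [⟨0, rfl⟩, ⟨1, rfl⟩, ⟨2, rfl⟩, ⟨3, rfl⟩, ⟨4, rfl⟩, ⟨5, rfl⟩, ⟨6, rfl⟩]
  have hle := finrank_le_of_span_eq_top (R := ℂ)
    (v := ![(1 : Aff q), t1, t2, t1 * t2, t2 * t1, t1 * t2 * t1, t2 * t1 * t2])
    (by rw [hr, ← hM, hspan])
  simpa using hle
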